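/- arXiv:1902.09586 — 2 statements merged into one kernel-verified Lean document; each statement's English description precedes it below -/
import Mathlib

section
/- In a single transaction T, for X ⊆ T and an extension Y = X ∪ {z} with z ∈ T and z ≻ x for all x ∈ X, the remaining positive utility bound holds: pu(Y,T) + rpu(Y,T) ≤ pu(X,T) + rpu(X,T). -/
open Finset

/-- Positive utility of itemset `Z` inside a single transaction `T`. -/
def puT {α : Type} [DecidableEq α] (pr : α → ℤ) (q : α → ℕ) (Z : Finset α) : ℤ :=
  ∑ i ∈ Z.filter (fun i => 0 < pr i), pr i * (q i : ℤ)

/-- Remaining positive utility of `Z` in transaction `T`. -/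
def rpuT {α : Type} [DecidableEq α] [LinearOrder α] (T : Finset α)
    (pr : α → ℤ) (q : α → ℕ) (Z : Finset α) : ℤ :=
  ∑ i ∈ T.filter (fun i => (∀ x ∈ Z, x < i) ∧ 0 < pr i), pr i * (q i : ℤ)

theorem stmt7 {α : Type} [DecidableEq α] [LinearOrder α] (T : Finset α)
    (pr : α → ℤ) (q : α → ℕ) (hq : ∀ i, 0 < q i)
    (X : Finset α) (hXT : X ⊆ T) (z : α) (hzT : z ∈ T)
    (hz : ∀ x ∈ X, x < z) :
    puT pr q (insert z X) + rpuT T pr q (insert z X) ≤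
      puT pr q X + rpuT T pr q X := by
  have hzX : z ∉ X := fun h => lt_irrefl z (hz z h)
  set SY := T.filter (fun i => (∀ x ∈ insert z X, x < i) ∧ 0 < pr i) with hSY
  set SX := T.filter (fun i => (∀ x ∈ X, x < i) ∧ 0 < pr i) with hSX
  have hsub : SY ⊆ SX := by
    intro i hi
    simp only [hSY, hSX, mem_filter, mem_insert] at *
    exact ⟨hi.1, fun x hx => hi.2.1 x (Or.inr hx), hi.2.2⟩
  have hnonneg : ∀ i ∈ SX, i ∉ SY → 0 ≤ pr i * (q i : ℤ) := by
    intro i hi _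
    simp only [hSX, mem_filter] at hi
    exact mul_nonneg hi.2.2.le (by positivity)
  have hzSY : z ∉ SY := by
    simp only [hSY, mem_filter, mem_insert]
    intro h
    exact lt_irrefl z (h.2.1 z (Or.inl rfl))
  by_cases hp : 0 < pr z
  · have hpu : puT pr q (insert z X) = pr z * (q z : ℤ) + puT pr q X := by
      unfold puT
      rw [filter_insert, if_pos hp, sum_insert (by simp [hzX])]
    have hzSX : z ∈ SX := by
      simp only [hSX, mem_filter]
      exact ⟨hzT, hz, hp⟩
    have hsub' : insert z SY ⊆ SX := insert_subset hzSX hsub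
    have : ∑ i ∈ insert z SY, pr i * (q i : ℤ) ≤ ∑ i ∈ SX, pr i * (q i : ℤ) :=
      sum_le_sum_of_subset_of_nonneg hsub' (fun i hi hni => hnonneg i hi (fun h => hni (mem_insert_of_mem h)))
    rw [sum_insert hzSY] at this
    unfold rpuT
    rw [hpu]
    linarith
  · have hpu : puT pr q (insert z X) = puT pr q X := by
      unfold puT
      rw [filter_insert, if_neg hp]
    have : ∑ i ∈ SY, pr i * (q i : ℤ) ≤ ∑ i ∈ SX, pr i * (q i : ℤ) :=
      sum_le_sum_of_subset_of_nonneg hsub hnonneg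
    unfold rpuT
    rw [hpu]
    linarith
end

section
/- Correctness of threshold filtering for single items: any potential high-utility itemset (PHUI) consists only of items i satisfying Pro({i}) ≥ minPro·|D| and RTWU({i}) ≥ minUtil. -/
open Finset

def utilT {α ι : Type} (pr : α → ℤ) (q : α → ι → ℕ) (X : Finset α) (t : ι) : ℤ :=
  ∑ i ∈ X, pr i * (q i t : ℤ)

def totU {α ι : Type} [DecidableEq α] (D : Finset ι) (Trans : ι → Finset α)
    (pr : α → ℤ) (q : α → ι → ℕ) (X : Finset α) : ℤ :=
  ∑ t ∈ D.filter (fun t => X ⊆ Trans t), utilT pr q X t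

def RTU {α ι : Type} [DecidableEq α] (Trans : ι → Finset α)
    (pr : α → ℤ) (q : α → ι → ℕ) (t : ι) : ℤ :=
  ∑ i ∈ (Trans t).filter (fun i => 0 < pr i), pr i * (q i t : ℤ)

def RTWU {α ι : Type} [DecidableEq α] (D : Finset ι) (Trans : ι → Finset α)
    (pr : α → ℤ) (q : α → ι → ℕ) (X : Finset α) : ℤ :=
  ∑ t ∈ D.filter (fun t => X ⊆ Trans t), RTU Trans pr q t

def Pro {α ι : Type} [DecidableEq α] (D : Finset ι) (Trans : ι → Finset α)
    (p : α → ι → ℝ) (X : Finset α) : ℝ :=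
  ∑ t ∈ D.filter (fun t => X ⊆ Trans t), ∏ i ∈ X, p i t

/-- `X` is a potential high-utility itemset. -/
def PHUI {α ι : Type} [DecidableEq α] (D : Finset ι) (Trans : ι → Finset α)
    (pr : α → ℤ) (q : α → ι → ℕ) (p : α → ι → ℝ) (minUtil : ℤ) (minPro : ℝ)
    (X : Finset α) : Prop :=
  minUtil ≤ totU D Trans pr q X ∧ minPro * D.card ≤ Pro D Trans p X

/-- Every item of a PHUI passes the singleton probability and RTWU thresholds. -/
theorem stmt18 {α ι : Type} [DecidableEq α] (D : Finset ι) (Trans : ι → Finset α)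
    (pr : α → ℤ) (q : α → ι → ℕ) (hq : ∀ i t, 0 < q i t)
    (p : α → ι → ℝ) (hp : ∀ i t, 0 ≤ p i t ∧ p i t ≤ 1)
    (minUtil : ℤ) (minPro : ℝ) (X : Finset α)
    (hX : PHUI D Trans pr q p minUtil minPro X) :
    ∀ i ∈ X, minPro * D.card ≤ Pro D Trans p {i} ∧ minUtil ≤ RTWU D Trans pr q {i} := by
  intro i hi
  have hsub : D.filter (fun t => X ⊆ Trans t) ⊆ D.filter (fun t => ({i} : Finset α) ⊆ Trans t) := by
    intro t ht
    simp only [mem_filter, singleton_subset_iff] at ht ⊢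
    exact ⟨ht.1, ht.2 hi⟩
  constructor
  · refine le_trans hX.2 ?_
    unfold Pro
    calc ∑ t ∈ D.filter (fun t => X ⊆ Trans t), ∏ j ∈ X, p j t
        ≤ ∑ t ∈ D.filter (fun t => X ⊆ Trans t), ∏ j ∈ ({i} : Finset α), p j t := by
          apply Finset.sum_le_sum
          intro t _
          have : ∏ j ∈ X, p j t = p i t * ∏ j ∈ X.erase i, p j t :=
            (Finset.mul_prod_erase X _ hi).symm
          rw [this, Finset.prod_singleton]
          have h1 : ∏ j ∈ X.erase i, p j t ≤ 1 :=
            Finset.prod_le_one (fun j _ => (hp j t).1) (fun j _ => (hp j t).2)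
          calc p i t * ∏ j ∈ X.erase i, p j t ≤ p i t * 1 :=
                mul_le_mul_of_nonneg_left h1 (hp i t).1
            _ = p i t := mul_one _
      _ ≤ ∑ t ∈ D.filter (fun t => ({i} : Finset α) ⊆ Trans t), ∏ j ∈ ({i} : Finset α), p j t := by
          apply Finset.sum_le_sum_of_subset_of_nonneg hsub
          intro t _ _
          rw [Finset.prod_singleton]
          exact (hp i t).1
  · refine le_trans hX.1 ?_
    unfold totU RTWU
    calc ∑ t ∈ D.filter (fun t => X ⊆ Trans t), utilT pr q X t
        ≤ ∑ t ∈ D.filter (fun t => X ⊆ Trans t), RTU Trans pr q t := by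
          apply Finset.sum_le_sum
          intro t ht
          have hXt : X ⊆ Trans t := (mem_filter.mp ht).2
          unfold utilT RTU
          calc ∑ j ∈ X, pr j * (q j t : ℤ)
              ≤ ∑ j ∈ X.filter (fun j => 0 < pr j), pr j * (q j t : ℤ) := by
                rw [← Finset.sum_filter_add_sum_filter_not X (fun j => 0 < pr j)]
                refine add_le_of_nonpos_right (Finset.sum_nonpos ?_)
                intro j hj
                have : pr j ≤ 0 := le_of_not_gt (mem_filter.mp hj).2
                exact mul_nonpos_of_nonpos_of_nonneg this (Int.ofNat_nonneg _)
            _ ≤ ∑ j ∈ (Trans t).filter (fun j => 0 < pr j), pr j * (q j t : ℤ) := by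
                apply Finset.sum_le_sum_of_subset_of_nonneg
                · exact Finset.filter_subset_filter _ hXt
                · intro j hj _
                  have := (mem_filter.mp hj).2
                  positivity
      _ ≤ ∑ t ∈ D.filter (fun t => ({i} : Finset α) ⊆ Trans t), RTU Trans pr q t := by
          apply Finset.sum_le_sum_of_subset_of_nonneg hsub
          intro t _ _
          unfold RTU
          apply Finset.sum_nonneg
          intro j hj
          have := (mem_filter.mp hj).2
          positivity
end
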